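/- (Rank obstruction to cooling: necessity of diverging energy.) Let ρ_S and ρ_M be density matrices on ℂ^{d_S} and ℂ^{d_M}, let U be a unitary on ℂ^{d_S} ⊗ ℂ^{d_M}, and set σ' := U (ρ_S ⊗ ρ_M) U†, ρ'_S := Tr_M σ', ρ'_M := Tr_S σ'. Then rank(ρ'_S) · rank(ρ'_M) ≥ rank(ρ_S) · rank(ρ_M). In particular, if rank(ρ'_S) < rank(ρ_S), then rank(ρ'_M) > rank(ρ_M), so the support of ρ'_M is not contained in the support of ρ_M. -/

import Mathlib

open scoped Kronecker ComplexOrder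
open Matrix

/-- Partial trace over the second (right) tensor factor. -/
noncomputable def ptrR {α β : Type*} [Fintype β] (σ : Matrix (α × β) (α × β) ℂ) :
    Matrix α α ℂ :=
  Matrix.of fun i i' => ∑ k, σ (i, k) (i', k)

/-- Partial trace over the first (left) tensor factor. -/
noncomputable def ptrL {α β : Type*} [Fintype α] (σ : Matrix (α × β) (α × β) ℂ) :
    Matrix β β ℂ :=
  Matrix.of fun j j' => ∑ k, σ (k, j) (k, j')

variable {α β : Type*} [Fintype α] [Fintype β] [DecidableEq α] [DecidableEq β]

lemma mul_one_kron_apply (M : Matrix (α × β) (α × β) ℂ) (W : Matrix β β ℂ)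
    (p : α × β) (c : α) (k : β) :
    (M * ((1 : Matrix α α ℂ) ⊗ₖ W)) p (c, k) = ∑ f, M p (c, f) * W f k := by
  rw [mul_apply, Fintype.sum_prod_type]
  simp [kroneckerMap_apply, one_apply, mul_ite, ite_mul, mul_zero, zero_mul,
    Finset.sum_ite_irrel, Finset.sum_const_zero, Finset.sum_ite_eq', one_mul]

lemma one_kron_mul_apply (M : Matrix (α × β) (α × β) ℂ) (W : Matrix β β ℂ)
    (i : α) (k : β) (q : α × β) :
    (((1 : Matrix α α ℂ) ⊗ₖ W) * M) (i, k) q = ∑ b, W k b * M (i, b) q := by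
  rw [mul_apply, Fintype.sum_prod_type]
  simp [kroneckerMap_apply, one_apply, mul_ite, ite_mul, mul_zero, zero_mul,
    Finset.sum_ite_irrel, Finset.sum_const_zero, Finset.sum_ite_eq, one_mul]

lemma mul_kron_one_apply (M : Matrix (α × β) (α × β) ℂ) (V : Matrix α α ℂ)
    (p : α × β) (c : α) (k : β) :
    (M * (V ⊗ₖ (1 : Matrix β β ℂ))) p (c, k) = ∑ a, M p (a, k) * V a c := by
  rw [mul_apply, Fintype.sum_prod_type]
  simp [kroneckerMap_apply, one_apply, mul_ite, ite_mul, mul_zero, zero_mul,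
    Finset.sum_ite_irrel, Finset.sum_const_zero, Finset.sum_ite_eq', mul_one]

lemma kron_one_mul_apply (M : Matrix (α × β) (α × β) ℂ) (V : Matrix α α ℂ)
    (i : α) (k : β) (q : α × β) :
    ((V ⊗ₖ (1 : Matrix β β ℂ)) * M) (i, k) q = ∑ a, V i a * M (a, k) q := by
  rw [mul_apply, Fintype.sum_prod_type]
  simp [kroneckerMap_apply, one_apply, mul_ite, ite_mul, mul_zero, zero_mul,
    Finset.sum_ite_irrel, Finset.sum_const_zero, Finset.sum_ite_eq, mul_one]

set_option linter.unusedSectionVars false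

lemma ptrR_kron_one (A B : Matrix α α ℂ) (σ : Matrix (α × β) (α × β) ℂ) :
    ptrR ((A ⊗ₖ (1 : Matrix β β ℂ)) * σ * (B ⊗ₖ (1 : Matrix β β ℂ))) = A * ptrR σ * B := by
  ext i i'
  simp only [ptrR, of_apply]
  calc ∑ k, ((A ⊗ₖ (1 : Matrix β β ℂ)) * σ * (B ⊗ₖ (1 : Matrix β β ℂ))) (i, k) (i', k)
      = ∑ k, ∑ c, (∑ a, A i a * σ (a, k) (c, k)) * B c i' := by
        refine Finset.sum_congr rfl fun k _ => ?_
        rw [mul_kron_one_apply]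
        exact Finset.sum_congr rfl fun c _ => by rw [kron_one_mul_apply]
    _ = ∑ c, (∑ a, A i a * ∑ k, σ (a, k) (c, k)) * B c i' := by
        rw [Finset.sum_comm]
        refine Finset.sum_congr rfl fun c _ => ?_
        rw [← Finset.sum_mul]
        congr 1
        rw [Finset.sum_comm]
        exact Finset.sum_congr rfl fun a _ => (Finset.mul_sum _ _ _).symm
    _ = (A * ptrR σ * B) i i' := by
        simp only [mul_apply, ptrR, of_apply]

lemma ptrL_one_kron (A B : Matrix β β ℂ) (σ : Matrix (α × β) (α × β) ℂ) :
    ptrL (((1 : Matrix α α ℂ) ⊗ₖ A) * σ * ((1 : Matrix α α ℂ) ⊗ₖ B)) = A * ptrL σ * B := by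
  ext j j'
  simp only [ptrL, of_apply]
  calc ∑ k, (((1 : Matrix α α ℂ) ⊗ₖ A) * σ * ((1 : Matrix α α ℂ) ⊗ₖ B)) (k, j) (k, j')
      = ∑ k, ∑ c, (∑ b, A j b * σ (k, b) (k, c)) * B c j' := by
        refine Finset.sum_congr rfl fun k _ => ?_
        rw [mul_one_kron_apply]
        exact Finset.sum_congr rfl fun c _ => by rw [one_kron_mul_apply]
    _ = ∑ c, (∑ b, A j b * ∑ k, σ (k, b) (k, c)) * B c j' := by
        rw [Finset.sum_comm]
        refine Finset.sum_congr rfl fun c _ => ?_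
        rw [← Finset.sum_mul]
        congr 1
        rw [Finset.sum_comm]
        exact Finset.sum_congr rfl fun b _ => (Finset.mul_sum _ _ _).symm
    _ = (A * ptrL σ * B) j j' := by
        simp only [mul_apply, ptrL, of_apply]

lemma ptrR_conj_one_kron {W : Matrix β β ℂ} (hW : W * Wᴴ = 1) (σ : Matrix (α × β) (α × β) ℂ) :
    ptrR (((1 : Matrix α α ℂ) ⊗ₖ Wᴴ) * σ * ((1 : Matrix α α ℂ) ⊗ₖ W)) = ptrR σ := by
  have hd : ∀ f b : β, (∑ k, W f k * star (W b k)) = if f = b then 1 else 0 := by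
    intro f b
    have := congrFun (congrFun hW f) b
    simpa [mul_apply, conjTranspose_apply, one_apply] using this
  ext i i'
  simp only [ptrR, of_apply]
  calc ∑ k, (((1 : Matrix α α ℂ) ⊗ₖ Wᴴ) * σ * ((1 : Matrix α α ℂ) ⊗ₖ W)) (i, k) (i', k)
      = ∑ k, ∑ f, ∑ b, star (W b k) * σ (i, b) (i', f) * W f k := by
        refine Finset.sum_congr rfl fun k _ => ?_
        rw [mul_one_kron_apply]
        refine Finset.sum_congr rfl fun f _ => ?_
        rw [one_kron_mul_apply, Finset.sum_mul]
        exact Finset.sum_congr rfl fun b _ => by rw [conjTranspose_apply]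
    _ = ∑ f, ∑ b, σ (i, b) (i', f) * ∑ k, W f k * star (W b k) := by
        rw [Finset.sum_comm]
        refine Finset.sum_congr rfl fun f _ => ?_
        rw [Finset.sum_comm]
        refine Finset.sum_congr rfl fun b _ => ?_
        rw [Finset.mul_sum]
        exact Finset.sum_congr rfl fun k _ => by ring
    _ = ∑ b, σ (i, b) (i', b) := by
        simp only [hd, mul_ite, mul_one, mul_zero]
        rw [Finset.sum_comm]
        simp

lemma ptrL_conj_kron_one {V : Matrix α α ℂ} (hV : V * Vᴴ = 1) (σ : Matrix (α × β) (α × β) ℂ) :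
    ptrL ((Vᴴ ⊗ₖ (1 : Matrix β β ℂ)) * σ * (V ⊗ₖ (1 : Matrix β β ℂ))) = ptrL σ := by
  have hd : ∀ f b : α, (∑ k, V f k * star (V b k)) = if f = b then 1 else 0 := by
    intro f b
    have := congrFun (congrFun hV f) b
    simpa [mul_apply, conjTranspose_apply, one_apply] using this
  ext j j'
  simp only [ptrL, of_apply]
  calc ∑ k, ((Vᴴ ⊗ₖ (1 : Matrix β β ℂ)) * σ * (V ⊗ₖ (1 : Matrix β β ℂ))) (k, j) (k, j')
      = ∑ k, ∑ a, ∑ b, star (V b k) * σ (b, j) (a, j') * V a k := by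
        refine Finset.sum_congr rfl fun k _ => ?_
        rw [mul_kron_one_apply]
        refine Finset.sum_congr rfl fun a _ => ?_
        rw [kron_one_mul_apply, Finset.sum_mul]
        exact Finset.sum_congr rfl fun b _ => by rw [conjTranspose_apply]
    _ = ∑ a, ∑ b, σ (b, j) (a, j') * ∑ k, V a k * star (V b k) := by
        rw [Finset.sum_comm]
        refine Finset.sum_congr rfl fun a _ => ?_
        rw [Finset.sum_comm]
        refine Finset.sum_congr rfl fun b _ => ?_
        rw [Finset.mul_sum]
        exact Finset.sum_congr rfl fun k _ => by ring
    _ = ∑ b, σ (b, j) (b, j') := by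
        simp only [hd, mul_ite, mul_one, mul_zero]
        rw [Finset.sum_comm]
        simp

lemma kron_conjT (V : Matrix α α ℂ) (W : Matrix β β ℂ) : (V ⊗ₖ W)ᴴ = Vᴴ ⊗ₖ Wᴴ := by
  ext ⟨i,k⟩ ⟨j,l⟩; simp [conjTranspose_apply, kroneckerMap_apply]

lemma kron_unitary {A : Matrix α α ℂ} {B : Matrix β β ℂ}
    (hA : A ∈ Matrix.unitaryGroup α ℂ) (hB : B ∈ Matrix.unitaryGroup β ℂ) :
    A ⊗ₖ B ∈ Matrix.unitaryGroup (α × β) ℂ := by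
  rw [mem_unitaryGroup_iff] at *
  rw [star_eq_conjTranspose, kron_conjT, ← mul_kronecker_mul]
  rw [star_eq_conjTranspose] at hA hB
  rw [hA, hB, one_kronecker_one]

lemma unitary_isUnit_det {n : Type*} [Fintype n] [DecidableEq n] {U : Matrix n n ℂ}
    (hU : U ∈ Matrix.unitaryGroup n ℂ) : IsUnit U.det := by
  have h : U * Uᴴ = 1 := mem_unitaryGroup_iff.mp hU
  exact IsUnit.of_mul_eq_one _ (by rw [← det_mul, h, det_one])

lemma rank_unitary_conj {n : Type*} [Fintype n] [DecidableEq n] (U X : Matrix n n ℂ)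
    (hU : U ∈ Matrix.unitaryGroup n ℂ) : (U * X * Uᴴ).rank = X.rank := by
  have h1 : IsUnit U.det := unitary_isUnit_det hU
  have h2 : IsUnit Uᴴ.det := by
    rw [← star_eq_conjTranspose]
    exact unitary_isUnit_det (Unitary.star_mem hU)
  rw [rank_mul_eq_left_of_isUnit_det _ _ h2, rank_mul_eq_right_of_isUnit_det _ _ h1]

lemma ptrR_isHermitian {σ : Matrix (α × β) (α × β) ℂ} (hσ : σ.IsHermitian) :
    (ptrR σ).IsHermitian := by
  ext i i'
  simp only [conjTranspose_apply, ptrR, of_apply, star_sum]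
  exact Finset.sum_congr rfl fun k _ => congrFun (congrFun hσ (i,k)) (i',k)

lemma ptrL_isHermitian {σ : Matrix (α × β) (α × β) ℂ} (hσ : σ.IsHermitian) :
    (ptrL σ).IsHermitian := by
  ext j j'
  simp only [conjTranspose_apply, ptrL, of_apply, star_sum]
  exact Finset.sum_congr rfl fun k _ => congrFun (congrFun hσ (k,j)) (k,j')

lemma ptrR_unitary_conj {V : Matrix α α ℂ} {W : Matrix β β ℂ}
    (hV : V ∈ Matrix.unitaryGroup α ℂ) (hW : W ∈ Matrix.unitaryGroup β ℂ)
    (σ : Matrix (α × β) (α × β) ℂ) :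
    ptrR ((V ⊗ₖ W)ᴴ * σ * (V ⊗ₖ W)) = Vᴴ * ptrR σ * V := by
  have e1 : (V ⊗ₖ W)ᴴ = (Vᴴ ⊗ₖ (1 : Matrix β β ℂ)) * ((1 : Matrix α α ℂ) ⊗ₖ Wᴴ) := by
    rw [← mul_kronecker_mul, mul_one, one_mul, kron_conjT]
  have e2 : V ⊗ₖ W = ((1 : Matrix α α ℂ) ⊗ₖ W) * (V ⊗ₖ (1 : Matrix β β ℂ)) := by
    rw [← mul_kronecker_mul, mul_one, one_mul]
  have e3 : (V ⊗ₖ W)ᴴ * σ * (V ⊗ₖ W)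
      = (Vᴴ ⊗ₖ (1 : Matrix β β ℂ)) *
        (((1 : Matrix α α ℂ) ⊗ₖ Wᴴ) * σ * ((1 : Matrix α α ℂ) ⊗ₖ W)) *
        (V ⊗ₖ (1 : Matrix β β ℂ)) := by
    rw [e1, e2]; simp only [mul_assoc]
  rw [e3, ptrR_kron_one, ptrR_conj_one_kron]
  rw [← star_eq_conjTranspose]
  exact mem_unitaryGroup_iff.mp hW

lemma ptrL_unitary_conj {V : Matrix α α ℂ} {W : Matrix β β ℂ}
    (hV : V ∈ Matrix.unitaryGroup α ℂ) (hW : W ∈ Matrix.unitaryGroup β ℂ)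
    (σ : Matrix (α × β) (α × β) ℂ) :
    ptrL ((V ⊗ₖ W)ᴴ * σ * (V ⊗ₖ W)) = Wᴴ * ptrL σ * W := by
  have e1 : (V ⊗ₖ W)ᴴ = ((1 : Matrix α α ℂ) ⊗ₖ Wᴴ) * (Vᴴ ⊗ₖ (1 : Matrix β β ℂ)) := by
    rw [← mul_kronecker_mul, mul_one, one_mul, kron_conjT]
  have e2 : V ⊗ₖ W = (V ⊗ₖ (1 : Matrix β β ℂ)) * ((1 : Matrix α α ℂ) ⊗ₖ W) := by
    rw [← mul_kronecker_mul, mul_one, one_mul]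
  have e3 : (V ⊗ₖ W)ᴴ * σ * (V ⊗ₖ W)
      = ((1 : Matrix α α ℂ) ⊗ₖ Wᴴ) *
        ((Vᴴ ⊗ₖ (1 : Matrix β β ℂ)) * σ * (V ⊗ₖ (1 : Matrix β β ℂ))) *
        ((1 : Matrix α α ℂ) ⊗ₖ W) := by
    rw [e1, e2]; simp only [mul_assoc]
  rw [e3, ptrL_one_kron, ptrL_conj_kron_one]
  rw [← star_eq_conjTranspose]
  exact mem_unitaryGroup_iff.mp hV

lemma psd_row_eq_zero {n : Type*} [Fintype n] [DecidableEq n] {τ : Matrix n n ℂ}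
    (hτ : τ.PosSemidef) {p : n} (hp : τ p p = 0) (q : n) : τ p q = 0 ∧ τ q p = 0 := by
  have hdot : star (Pi.single p (1:ℂ)) ⬝ᵥ τ *ᵥ Pi.single p 1 = τ p p := by
    simp [dotProduct, mulVec_single, Pi.single_apply, Finset.sum_ite_eq]
  have hcol : τ *ᵥ Pi.single p 1 = 0 := hτ.dotProduct_mulVec_zero_iff _ |>.mp (by rw [hdot, hp])
  have hqp : τ q p = 0 := by
    have := congrFun hcol q
    simpa [mulVec_single] using this
  refine ⟨?_, hqp⟩
  have h2 := congrFun (congrFun hτ.1 q) p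
  rw [conjTranspose_apply] at h2
  rw [hqp] at h2
  exact star_eq_zero.mp h2

lemma diag_nonneg {n : Type*} [Fintype n] [DecidableEq n] {τ : Matrix n n ℂ}
    (hτ : τ.PosSemidef) (p : n) : 0 ≤ τ p p := by
  have := hτ.dotProduct_mulVec_nonneg (Pi.single p 1)
  simpa [dotProduct, mulVec_single, Pi.single_apply, Finset.sum_ite_eq] using this

lemma key_rank_le (σ : Matrix (α × β) (α × β) ℂ) (hσ : σ.PosSemidef) :
    σ.rank ≤ (ptrR σ).rank * (ptrL σ).rank := by
  classical
  have hA : (ptrR σ).IsHermitian := ptrR_isHermitian hσ.1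
  have hB : (ptrL σ).IsHermitian := ptrL_isHermitian hσ.1
  set V : Matrix α α ℂ := (hA.eigenvectorUnitary : Matrix α α ℂ) with hVdef
  set W : Matrix β β ℂ := (hB.eigenvectorUnitary : Matrix β β ℂ) with hWdef
  have hVmem : V ∈ Matrix.unitaryGroup α ℂ := (hA.eigenvectorUnitary).2
  have hWmem : W ∈ Matrix.unitaryGroup β ℂ := (hB.eigenvectorUnitary).2
  set d : α → ℝ := hA.eigenvalues with hd
  set e : β → ℝ := hB.eigenvalues with he
  set X : Matrix (α × β) (α × β) ℂ := V ⊗ₖ W with hX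
  have hXmem : X ∈ Matrix.unitaryGroup (α × β) ℂ := kron_unitary hVmem hWmem
  set τ : Matrix (α × β) (α × β) ℂ := Xᴴ * σ * X with hτdef
  have hτ : τ.PosSemidef := hσ.conjTranspose_mul_mul_same X
  have hptrR : ptrR τ = diagonal (RCLike.ofReal ∘ d) := by
    rw [hτdef, hX, ptrR_unitary_conj hVmem hWmem, ← star_eq_conjTranspose]
    have h' := hA.conjStarAlgAut_star_eigenvectorUnitary
    rw [Unitary.conjStarAlgAut_star_apply] at h'
    exact h'
  have hptrL : ptrL τ = diagonal (RCLike.ofReal ∘ e) := by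
    rw [hτdef, hX, ptrL_unitary_conj hVmem hWmem, ← star_eq_conjTranspose]
    have h' := hB.conjStarAlgAut_star_eigenvectorUnitary
    rw [Unitary.conjStarAlgAut_star_apply] at h'
    exact h'
  -- rows/columns outside the joint support vanish
  have hdiagzero : ∀ p : α × β, (d p.1 = 0 ∨ e p.2 = 0) → τ p p = 0 := by
    rintro ⟨i, k⟩ (h0 | h0)
    · have hsum : ∑ k', τ (i, k') (i, k') = 0 := by
        have := congrFun (congrFun hptrR i) i
        simpa [ptrR, diagonal_apply_eq, h0] using this
      have := (Finset.sum_eq_zero_iff_of_nonneg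
        (fun k' _ => diag_nonneg hτ (i, k'))).mp hsum
      exact this k (Finset.mem_univ k)
    · have hsum : ∑ i', τ (i', k) (i', k) = 0 := by
        have := congrFun (congrFun hptrL k) k
        simpa [ptrL, diagonal_apply_eq, h0] using this
      have := (Finset.sum_eq_zero_iff_of_nonneg
        (fun i' _ => diag_nonneg hτ (i', k))).mp hsum
      exact this i (Finset.mem_univ i)
  set P : Matrix (α × β) (α × β) ℂ :=
    diagonal (fun p => if d p.1 ≠ 0 ∧ e p.2 ≠ 0 then (1:ℂ) else 0) with hP
  have hfact : τ = P * τ * P := by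
    ext p q
    rw [mul_diagonal, diagonal_mul]
    by_cases hp : d p.1 ≠ 0 ∧ e p.2 ≠ 0
    · by_cases hq : d q.1 ≠ 0 ∧ e q.2 ≠ 0
      · simp [hp, hq]
      · have : τ q q = 0 := hdiagzero q (by tauto)
        have := (psd_row_eq_zero hτ this p).2
        simp [hq, this]
    · have : τ p p = 0 := hdiagzero p (by tauto)
      have := (psd_row_eq_zero hτ this q).1
      simp [hp, this]
  have hcard : P.rank = Fintype.card {i // d i ≠ 0} * Fintype.card {k // e k ≠ 0} := by
    rw [hP, rank_diagonal]
    rw [← Fintype.card_prod]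
    refine (Fintype.card_congr ?_)
    refine (Equiv.subtypeEquivRight ?_).trans (Equiv.subtypeProdEquivProd)
    intro p
    simp only [ne_eq, ite_eq_right_iff, one_ne_zero, imp_false, not_not]
  have hrankτ : τ.rank = σ.rank := by
    rw [hτdef]
    have : Xᴴ * σ * X = Xᴴ * σ * (Xᴴ)ᴴ := by rw [conjTranspose_conjTranspose]
    rw [this]
    refine rank_unitary_conj _ _ ?_
    rw [← star_eq_conjTranspose]
    exact Unitary.star_mem hXmem
  have hrankA : (ptrR σ).rank = Fintype.card {i // d i ≠ 0} := hA.rank_eq_card_non_zero_eigs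
  have hrankB : (ptrL σ).rank = Fintype.card {k // e k ≠ 0} := hB.rank_eq_card_non_zero_eigs
  calc σ.rank = τ.rank := hrankτ.symm
    _ = (P * (τ * P)).rank := by rw [← mul_assoc, ← hfact]
    _ ≤ P.rank := rank_mul_le_left _ _
    _ = (ptrR σ).rank * (ptrL σ).rank := by rw [hcard, hrankA, hrankB]

lemma kron_spectral {A : Matrix α α ℂ} {B : Matrix β β ℂ}
    (hA : A.IsHermitian) (hB : B.IsHermitian) :
    A ⊗ₖ B = ((hA.eigenvectorUnitary : Matrix α α ℂ) ⊗ₖ (hB.eigenvectorUnitary : Matrix β β ℂ)) *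
      diagonal (fun p : α × β => (hA.eigenvalues p.1 : ℂ) * (hB.eigenvalues p.2 : ℂ)) *
      ((hA.eigenvectorUnitary : Matrix α α ℂ) ⊗ₖ (hB.eigenvectorUnitary : Matrix β β ℂ))ᴴ := by
  rw [kron_conjT,
    show (diagonal fun p : α × β => (hA.eigenvalues p.1 : ℂ) * (hB.eigenvalues p.2 : ℂ))
        = diagonal ((RCLike.ofReal ∘ hA.eigenvalues) : α → ℂ) ⊗ₖ
          diagonal ((RCLike.ofReal ∘ hB.eigenvalues) : β → ℂ) by
      rw [diagonal_kronecker_diagonal]; rfl,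
    ← mul_kronecker_mul, ← mul_kronecker_mul]
  rw [← star_eq_conjTranspose, ← star_eq_conjTranspose]
  exact congrArg₂ (kroneckerMap (· * ·)) hA.spectral_theorem hB.spectral_theorem

lemma rank_kron {A : Matrix α α ℂ} {B : Matrix β β ℂ}
    (hA : A.IsHermitian) (hB : B.IsHermitian) :
    (A ⊗ₖ B).rank = A.rank * B.rank := by
  classical
  rw [kron_spectral hA hB,
    rank_unitary_conj _ _ (kron_unitary (hA.eigenvectorUnitary).2 (hB.eigenvectorUnitary).2),
    rank_diagonal, hA.rank_eq_card_non_zero_eigs, hB.rank_eq_card_non_zero_eigs,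
    ← Fintype.card_prod]
  refine Fintype.card_congr ?_
  refine (Equiv.subtypeEquivRight ?_).trans (Equiv.subtypeProdEquivProd)
  intro p
  simp [mul_ne_zero_iff]

lemma kron_posSemidef {A : Matrix α α ℂ} {B : Matrix β β ℂ}
    (hA : A.PosSemidef) (hB : B.PosSemidef) : (A ⊗ₖ B).PosSemidef := by
  rw [kron_spectral hA.1 hB.1]
  refine PosSemidef.mul_mul_conjTranspose_same ?_ _
  refine posSemidef_diagonal_iff.mpr fun p => ?_
  have := mul_nonneg (hA.eigenvalues_nonneg p.1) (hB.eigenvalues_nonneg p.2)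
  rw [← Complex.ofReal_mul]
  exact_mod_cast Complex.zero_le_real.mpr this

lemma rank_pos_of_trace_one {n : Type*} [Fintype n] [DecidableEq n] {A : Matrix n n ℂ}
    (hA : A.IsHermitian) (h : A.trace = 1) : 0 < A.rank := by
  rcases Nat.eq_zero_or_pos A.rank with h0 | h
  · exfalso
    rw [hA.rank_eq_card_non_zero_eigs, Fintype.card_eq_zero_iff] at h0
    have hall : ∀ i, hA.eigenvalues i = 0 := fun i => by
      by_contra hne; exact h0.elim ⟨i, hne⟩
    have htr : A.trace = 0 := by
      rw [hA.spectral_theorem]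
      have : (diagonal (RCLike.ofReal ∘ hA.eigenvalues) : Matrix n n ℂ) = 0 := by
        ext i j
        by_cases hij : i = j <;> simp [diagonal_apply, hij, hall]
      rw [this, map_zero, trace_zero]
    rw [htr] at h
    exact one_ne_zero h.symm
  · exact h

/-- Rank obstruction to cooling: necessity of diverging energy:
the product of the ranks of the marginals cannot decrease under a global unitary applied to a
product state; in particular a rank decrease of the system forces a rank increase of the
machine, so the support of the final machine state is not contained in the support of the
initial one. -/
theorem rank_obstruction_to_cooling (dS dM : ℕ)
    (ρS : Matrix (Fin dS) (Fin dS) ℂ) (hρS : ρS.PosSemidef) (hρStr : ρS.trace = 1)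
    (ρM : Matrix (Fin dM) (Fin dM) ℂ) (hρM : ρM.PosSemidef) (hρMtr : ρM.trace = 1)
    (U : Matrix (Fin dS × Fin dM) (Fin dS × Fin dM) ℂ)
    (hU : U ∈ Matrix.unitaryGroup (Fin dS × Fin dM) ℂ) :
    ρS.rank * ρM.rank ≤ (ptrR (U * (ρS ⊗ₖ ρM) * Uᴴ)).rank * (ptrL (U * (ρS ⊗ₖ ρM) * Uᴴ)).rank ∧
    ((ptrR (U * (ρS ⊗ₖ ρM) * Uᴴ)).rank < ρS.rank →
      ρM.rank < (ptrL (U * (ρS ⊗ₖ ρM) * Uᴴ)).rank ∧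
      ¬ LinearMap.range (ptrL (U * (ρS ⊗ₖ ρM) * Uᴴ)).mulVecLin ≤ LinearMap.range ρM.mulVecLin) := by
  classical
  set σ' := U * (ρS ⊗ₖ ρM) * Uᴴ with hσ'def
  have hkron : (ρS ⊗ₖ ρM).PosSemidef := kron_posSemidef hρS hρM
  have hσ' : σ'.PosSemidef := hkron.mul_mul_conjTranspose_same U
  have hrankσ' : σ'.rank = ρS.rank * ρM.rank := by
    rw [hσ'def, rank_unitary_conj _ _ hU, rank_kron hρS.1 hρM.1]
  have hmain : ρS.rank * ρM.rank ≤ (ptrR σ').rank * (ptrL σ').rank := by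
    rw [← hrankσ']; exact key_rank_le σ' hσ'
  refine ⟨hmain, fun h1 => ?_⟩
  have hM0 : 0 < ρM.rank := rank_pos_of_trace_one hρM.1 hρMtr
  have h2 : ρM.rank < (ptrL σ').rank := by
    by_contra hle
    push_neg at hle
    have hlt : (ptrR σ').rank * (ptrL σ').rank < ρS.rank * ρM.rank :=
      lt_of_le_of_lt (Nat.mul_le_mul_left _ hle) (mul_lt_mul_of_pos_right h1 hM0)
    exact absurd hmain (not_le.mpr hlt)
  refine ⟨h2, fun hrange => ?_⟩
  have hle : (ptrL σ').rank ≤ ρM.rank := by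
    have := Submodule.finrank_mono hrange
    simpa [Matrix.rank] using this
  omega
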